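/- The limit as s → 1 of −ψ'(1−s) + (π²/4)·sec²(πs/2) equals −π²/12. -/

import Mathlib

open Filter Topology

/-- The digamma function `ψ = (log ∘ Γ)'`. -/
noncomputable def digamma (x : ℝ) : ℝ := deriv (fun t => Real.log (Real.Gamma t)) x

namespace TrigammaAux

open Real Set Finset


/-- summable majorant -/
lemma S0 : Summable (fun m : ℕ => (((m : ℝ) + 1) ^ 2)⁻¹) := by
  have h : Summable (fun n : ℕ => 1 / (n : ℝ) ^ 2) := summable_one_div_nat_pow.mpr one_lt_two
  have := (summable_nat_add_iff 1).mpr h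
  refine this.congr fun m => ?_
  push_cast
  rw [one_div]

lemma min_pos {a : ℝ} (ha : 0 < a) : 0 < min a 1 := lt_min ha one_pos

lemma inv_add_le {a x : ℝ} (ha : 0 < a) (hax : a ≤ x) (m : ℕ) :
    (x + m)⁻¹ ≤ (min a 1)⁻¹ * ((m : ℝ) + 1)⁻¹ := by
  have hm : (0:ℝ) ≤ (m : ℝ) := Nat.cast_nonneg m
  have hmin := min_pos ha
  have h1 : min a 1 ≤ a := min_le_left _ _
  have h2 : min a 1 ≤ 1 := min_le_right _ _
  have key : min a 1 * ((m : ℝ) + 1) ≤ x + m := by nlinarith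
  rw [← mul_inv]
  exact inv_anti₀ (by positivity) key

lemma qterm_bound {a x : ℝ} (ha : 0 < a) (hax : a ≤ x) (m : ℕ) :
    ((x + m) ^ 2)⁻¹ ≤ ((min a 1)⁻¹) ^ 2 * (((m : ℝ) + 1) ^ 2)⁻¹ := by
  have hxp : 0 < x := lt_of_lt_of_le ha hax
  have h := inv_add_le ha hax m
  have h0 : (0:ℝ) ≤ (x + m)⁻¹ := by positivity
  calc ((x + m) ^ 2)⁻¹ = ((x + m)⁻¹) ^ 2 := by rw [inv_pow]
    _ ≤ ((min a 1)⁻¹ * ((m : ℝ) + 1)⁻¹) ^ 2 := by gcongr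
    _ = ((min a 1)⁻¹) ^ 2 * (((m : ℝ) + 1) ^ 2)⁻¹ := by rw [mul_pow, inv_pow, inv_pow]

lemma tterm_eq {x : ℝ} (hx : 0 < x) (m : ℕ) :
    ((m : ℝ) + 1)⁻¹ - (x + m)⁻¹ = (x - 1) * (((m : ℝ) + 1)⁻¹ * (x + m)⁻¹) := by
  have h1 : ((m : ℝ) + 1) ≠ 0 := by positivity
  have h2 : (x + (m : ℝ)) ≠ 0 := by positivity
  field_simp
  ring

lemma tterm_bound {a b x : ℝ} (ha : 0 < a) (hx : x ∈ Icc a b) (m : ℕ) :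
    |((m : ℝ) + 1)⁻¹ - (x + m)⁻¹| ≤ (b + 1) * (min a 1)⁻¹ * (((m : ℝ) + 1) ^ 2)⁻¹ := by
  have hxa := hx.1
  have hxp : 0 < x := lt_of_lt_of_le ha hxa
  rw [tterm_eq hxp m, abs_mul, abs_mul]
  have h1 : |x - 1| ≤ b + 1 := by
    rw [abs_sub_le_iff]; constructor <;> nlinarith [hx.2, hxp]
  have h2 : |((m : ℝ) + 1)⁻¹| = ((m : ℝ) + 1)⁻¹ := abs_of_pos (by positivity)
  have h3 : |(x + (m:ℝ))⁻¹| = (x + m)⁻¹ := abs_of_pos (by positivity)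
  rw [h2, h3]
  have h4 := inv_add_le ha hxa m
  calc |x - 1| * (((m : ℝ) + 1)⁻¹ * (x + m)⁻¹)
      ≤ (b + 1) * (((m : ℝ) + 1)⁻¹ * ((min a 1)⁻¹ * ((m : ℝ) + 1)⁻¹)) := by
        have hb1 : (0:ℝ) ≤ b + 1 := by nlinarith [hx.2, hxp]
        apply mul_le_mul h1 (mul_le_mul_of_nonneg_left h4 (by positivity)) (by positivity) hb1
    _ = (b + 1) * (min a 1)⁻¹ * (((m : ℝ) + 1) ^ 2)⁻¹ := by rw [← inv_pow]; ring



noncomputable def q (x : ℝ) : ℝ := ∑' m : ℕ, ((x + m) ^ 2)⁻¹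
noncomputable def hphi (x : ℝ) : ℝ := ∑' m : ℕ, (((m : ℝ) + 1)⁻¹ - (x + m)⁻¹)
noncomputable def p (x : ℝ) : ℝ := -Real.eulerMascheroniConstant + hphi x


lemma summable_qterm {x : ℝ} (hx : 0 < x) : Summable (fun m : ℕ => ((x + m) ^ 2)⁻¹) :=
  Summable.of_nonneg_of_le (fun m => by positivity)
    (fun m => qterm_bound hx le_rfl m) (S0.mul_left _)

lemma summable_tterm {x : ℝ} (hx : 0 < x) :
    Summable (fun m : ℕ => ((m : ℝ) + 1)⁻¹ - (x + m)⁻¹) := by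
  apply Summable.of_norm
  exact Summable.of_nonneg_of_le (fun m => norm_nonneg _)
    (fun m => tterm_bound hx (mem_Icc.mpr ⟨le_rfl, le_rfl⟩) m) (S0.mul_left _)

/-- uniform convergence of the partial sums of `q` on compacts of `Ioi 0` -/
lemma tlu_q : TendstoLocallyUniformlyOn
    (fun (N : ℕ) (x : ℝ) => ∑ m ∈ range N, ((x + m) ^ 2)⁻¹) q atTop (Ioi 0) := by
  rw [tendstoLocallyUniformlyOn_iff_forall_isCompact isOpen_Ioi]
  intro K hK hKc
  rcases K.eq_empty_or_nonempty with rfl | hne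
  · simp [tendstoUniformlyOn_empty]
  obtain ⟨a, haK, halb⟩ := hKc.exists_isLeast hne
  have ha : 0 < a := hK haK
  exact tendstoUniformlyOn_tsum_nat (S0.mul_left (((min a 1)⁻¹) ^ 2))
    (fun m x hx => by
      rw [Real.norm_eq_abs, abs_of_pos (by
        have : 0 < x := hK hx
        positivity)]
      exact qterm_bound ha (halb hx) m)

lemma tuo_t {a b : ℝ} (ha : 0 < a) : TendstoUniformlyOn
    (fun (N : ℕ) (x : ℝ) => ∑ m ∈ range N, (((m : ℝ) + 1)⁻¹ - (x + m)⁻¹)) hphi atTop (Icc a b) :=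
  tendstoUniformlyOn_tsum_nat (S0.mul_left ((b + 1) * (min a 1)⁻¹))
    (fun m x hx => by rw [Real.norm_eq_abs]; exact tterm_bound ha hx m)

lemma hasDerivAt_term {x : ℝ} (hx : 0 < x) (m : ℕ) :
    HasDerivAt (fun y : ℝ => ((m : ℝ) + 1)⁻¹ - (y + m)⁻¹) (((x + m) ^ 2)⁻¹) x := by
  have h0 : x + (m : ℝ) ≠ 0 := by positivity
  have h1 : HasDerivAt (fun y : ℝ => y + (m : ℝ)) 1 x := (hasDerivAt_id x).add_const _
  have h2 := h1.inv h0
  have h3 := (hasDerivAt_const x (((m : ℝ) + 1)⁻¹)).sub h2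
  exact h3.congr_deriv (by ring)

lemma hasDerivAt_hphi {x : ℝ} (hx : 0 < x) : HasDerivAt hphi (q x) x := by
  apply hasDerivAt_of_tendstoLocallyUniformlyOn isOpen_Ioi tlu_q
    (f := fun (N : ℕ) (x : ℝ) => ∑ m ∈ range N, (((m : ℝ) + 1)⁻¹ - (x + m)⁻¹))
  · filter_upwards with N y hy
    exact HasDerivAt.fun_sum (fun m _ => hasDerivAt_term hy m)
  · intro y hy
    exact ((summable_tterm hy).hasSum).tendsto_sum_nat
  · exact hx

lemma hasDerivAt_p {x : ℝ} (hx : 0 < x) : HasDerivAt p (q x) x :=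
  (hasDerivAt_hphi hx).const_add _





lemma harmonic_cast (n : ℕ) :
    ((harmonic n : ℚ) : ℝ) = ∑ m ∈ range n, ((m : ℝ) + 1)⁻¹ := by
  simp only [harmonic]
  push_cast
  rfl

lemma log_ratio_lim : Tendsto (fun n : ℕ => Real.log ((n : ℝ) + 1) - Real.log n) atTop (𝓝 0) := by
  have h1 : Tendsto (fun n : ℕ => 1 + 1 / (n : ℝ)) atTop (𝓝 1) := by
    simpa using (tendsto_one_div_atTop_nhds_zero_nat.const_add (1:ℝ))
  have h2 : Tendsto (fun n : ℕ => Real.log (1 + 1 / (n : ℝ))) atTop (𝓝 0) := by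
    have := (Real.continuousAt_log one_ne_zero).tendsto.comp h1
    simpa [Function.comp_def] using this
  apply h2.congr'
  filter_upwards [eventually_gt_atTop 0] with n hn
  have hn' : (0:ℝ) < n := by exact_mod_cast hn
  rw [show (1 : ℝ) + 1 / n = ((n : ℝ) + 1) / n by field_simp, Real.log_div (by positivity) hn'.ne']

lemma clim : Tendsto (fun n : ℕ => Real.log n - ∑ m ∈ range (n + 1), ((m : ℝ) + 1)⁻¹) atTop
    (𝓝 (-Real.eulerMascheroniConstant)) := by
  have A : Tendsto (fun n : ℕ => ((harmonic (n + 1) : ℚ) : ℝ) - Real.log ((n : ℝ) + 1)) atTop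
      (𝓝 Real.eulerMascheroniConstant) := by
    have := Real.tendsto_harmonic_sub_log.comp (tendsto_add_atTop_nat 1)
    apply this.congr
    intro n
    simp [Function.comp]
  have B := A.neg.sub log_ratio_lim
  rw [show -Real.eulerMascheroniConstant = -Real.eulerMascheroniConstant - 0 by ring]
  apply B.congr
  intro n
  rw [harmonic_cast]
  ring

lemma tlu_D : TendstoLocallyUniformlyOn
    (fun (n : ℕ) (y : ℝ) => Real.log n - ∑ m ∈ range (n + 1), (y + m)⁻¹) p atTop (Ioi 0) := by
  rw [tendstoLocallyUniformlyOn_iff_forall_isCompact isOpen_Ioi]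
  intro K hK hKc
  rcases K.eq_empty_or_nonempty with rfl | hne
  · simp [tendstoUniformlyOn_empty]
  obtain ⟨a, haK, halb⟩ := hKc.exists_isLeast hne
  obtain ⟨b, hbK, hbub⟩ := hKc.exists_isGreatest hne
  have ha : 0 < a := hK haK
  have hKsub : K ⊆ Icc a b := fun x hx => ⟨halb hx, hbub hx⟩
  have hT : TendstoUniformlyOn
      (fun (n : ℕ) (x : ℝ) => ∑ m ∈ range (n + 1), (((m : ℝ) + 1)⁻¹ - (x + m)⁻¹)) hphi atTop
      (Icc a b) := fun u hu => (tendsto_add_atTop_nat 1).eventually ((tuo_t (b := b) ha) u hu)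
  have hc : TendstoUniformlyOn
      (fun (n : ℕ) (_ : ℝ) => Real.log n - ∑ m ∈ range (n + 1), ((m : ℝ) + 1)⁻¹)
      (fun _ => -Real.eulerMascheroniConstant) atTop (Icc a b) :=
    clim.tendstoUniformlyOn_const _
  have hadd := (hc.add hT).mono hKsub
  have hpeq : p = (fun _ : ℝ => -Real.eulerMascheroniConstant) + hphi := by
    funext y; simp [p, Pi.add_apply]
  rw [hpeq]
  apply hadd.congr
  filter_upwards with n x hx
  simp only [Pi.add_apply]
  rw [Finset.sum_sub_distrib]
  ring

lemma hasDerivAt_logGammaSeq {y : ℝ} (hy : 0 < y) (n : ℕ) :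
    HasDerivAt (fun z : ℝ => Real.BohrMollerup.logGammaSeq z n)
      (Real.log n - ∑ m ∈ range (n + 1), (y + m)⁻¹) y := by
  have h1 : HasDerivAt (fun z : ℝ => z * Real.log n) (Real.log n) y := hasDerivAt_mul_const _
  have h2 := h1.add_const (Real.log (Nat.factorial n))
  have h3 : HasDerivAt (fun z : ℝ => ∑ m ∈ range (n + 1), Real.log (z + m))
      (∑ m ∈ range (n + 1), (y + m)⁻¹) y := by
    apply HasDerivAt.fun_sum
    intro m _
    have hne : y + (m : ℝ) ≠ 0 := by positivity
    have := (((hasDerivAt_id y).add_const (m : ℝ)).log hne)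
    simpa using this
  have := h2.sub h3
  simp only [Real.BohrMollerup.logGammaSeq]
  exact this

lemma hasDerivAt_logGamma {x : ℝ} (hx : 0 < x) :
    HasDerivAt (fun t : ℝ => Real.log (Real.Gamma t)) (p x) x := by
  apply hasDerivAt_of_tendstoLocallyUniformlyOn isOpen_Ioi tlu_D
    (f := fun (n : ℕ) (z : ℝ) => Real.BohrMollerup.logGammaSeq z n)
  · filter_upwards with n y hy
    exact hasDerivAt_logGammaSeq hy n
  · intro y hy
    exact Real.BohrMollerup.tendsto_log_gamma hy
  · exact hx





lemma digamma_pos_eq {x : ℝ} (hx : 0 < x) : digamma x = p x :=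
  (hasDerivAt_logGamma hx).deriv

lemma deriv_digamma_pos {x : ℝ} (hx : 0 < x) : deriv digamma x = q x := by
  have heq : digamma =ᶠ[𝓝 x] p :=
    eventually_of_mem (isOpen_Ioi.mem_nhds hx) fun y hy => digamma_pos_eq hy
  rw [heq.deriv_eq]
  exact (hasDerivAt_p hx).deriv

lemma digamma_neg_eq {x : ℝ} (hx : x ∈ Ioo (-1 : ℝ) 0) :
    digamma x = p (x + 1) - x⁻¹ := by
  have hx0 : x ≠ 0 := hx.2.ne
  have hx1 : 0 < x + 1 := by linarith [hx.1]
  have hEq : ∀ y ∈ Ioo (-1 : ℝ) 0,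
      Real.log (Real.Gamma y) = Real.log (Real.Gamma (y + 1)) - Real.log y := by
    intro y hy
    have hy0 : y ≠ 0 := hy.2.ne
    have hy1 : 0 < y + 1 := by linarith [hy.1]
    have hG : Real.Gamma (y + 1) = y * Real.Gamma y := Real.Gamma_add_one hy0
    have hGpos : Real.Gamma (y + 1) ≠ 0 := (Real.Gamma_pos_of_pos hy1).ne'
    have hGy : Real.Gamma y = Real.Gamma (y + 1) / y := by rw [hG]; field_simp
    rw [hGy, Real.log_div hGpos hy0]
  have hD : HasDerivAt (fun t : ℝ => Real.log (Real.Gamma (t + 1)) - Real.log t)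
      (p (x + 1) - x⁻¹) x := by
    have hA : HasDerivAt (fun t : ℝ => Real.log (Real.Gamma (t + 1))) (p (x + 1)) x := by
      have := (hasDerivAt_logGamma hx1).comp x ((hasDerivAt_id x).add_const 1)
      simpa [Function.comp_def] using this
    exact hA.sub (Real.hasDerivAt_log hx0)
  have hD2 : HasDerivAt (fun t : ℝ => Real.log (Real.Gamma t)) (p (x + 1) - x⁻¹) x := by
    apply hD.congr_of_eventuallyEq
    filter_upwards [isOpen_Ioo.mem_nhds hx] with y hy
    rw [hEq y hy]
  exact hD2.deriv

lemma deriv_digamma_neg {x : ℝ} (hx : x ∈ Ioo (-1 : ℝ) 0) :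
    deriv digamma x = (x ^ 2)⁻¹ + q (x + 1) := by
  have hx0 : x ≠ 0 := hx.2.ne
  have hx1 : 0 < x + 1 := by linarith [hx.1]
  have heq : digamma =ᶠ[𝓝 x] fun y => p (y + 1) - y⁻¹ :=
    eventually_of_mem (isOpen_Ioo.mem_nhds hx) fun y hy => digamma_neg_eq hy
  rw [heq.deriv_eq]
  have hA : HasDerivAt (fun y : ℝ => p (y + 1)) (q (x + 1)) x := by
    have := (hasDerivAt_p hx1).comp x ((hasDerivAt_id x).add_const 1)
    simpa [Function.comp_def] using this
  have := hA.sub (hasDerivAt_inv hx0)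
  exact this.deriv.trans (by ring)

lemma q_split {x : ℝ} (hx : 0 < x) : q x = (x ^ 2)⁻¹ + q (x + 1) := by
  have hs := summable_qterm hx
  have h0 := hs.hasSum.tendsto_sum_nat
  rw [q, Summable.tsum_eq_zero_add hs]
  congr 1
  · norm_num
  · rw [q]
    apply tsum_congr
    intro m
    push_cast
    ring_nf

lemma deriv_digamma_eq {t : ℝ} (h1 : t ∈ Ioo (-1 : ℝ) 1) (h0 : t ≠ 0) :
    deriv digamma t = (t ^ 2)⁻¹ + q (t + 1) := by
  rcases lt_or_gt_of_ne h0 with hlt | hgt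
  · exact deriv_digamma_neg ⟨h1.1, hlt⟩
  · rw [deriv_digamma_pos hgt, q_split hgt]

lemma q_one : q 1 = Real.pi ^ 2 / 6 := by
  have h := hasSum_zeta_two
  have h3 : HasSum (fun n : ℕ => (1 : ℝ) / ((n + 1 : ℕ) : ℝ) ^ 2) (Real.pi ^ 2 / 6) := by
    rw [hasSum_nat_add_iff (f := fun n : ℕ => (1 : ℝ) / (n : ℝ) ^ 2) 1]
    simpa using h
  have hfun : (fun n : ℕ => (1 : ℝ) / ((n + 1 : ℕ) : ℝ) ^ 2)
      = fun n : ℕ => (((1 : ℝ) + (n : ℝ)) ^ 2)⁻¹ := by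
    funext n; push_cast; rw [one_div, add_comm]
  rw [hfun] at h3
  rw [q]
  exact h3.tsum_eq


lemma q_contAt : ContinuousAt q 1 := by
  have hc : ContinuousOn (fun x : ℝ => ∑' m : ℕ, ((x + (m : ℝ)) ^ 2)⁻¹) (Ioo (1/2 : ℝ) 2) := by
    apply continuousOn_tsum (f := fun (m : ℕ) (x : ℝ) => ((x + (m : ℝ)) ^ 2)⁻¹)
      (u := fun m : ℕ => ((min (1/2 : ℝ) 1)⁻¹) ^ 2 * (((m : ℝ) + 1) ^ 2)⁻¹)
    · intro m
      apply ContinuousOn.inv₀ (((continuous_id.add continuous_const).pow 2).continuousOn)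
      intro x hx
      have hx0 : (0:ℝ) < x := lt_trans (by norm_num) hx.1
      show (x + (m:ℝ)) ^ 2 ≠ 0
      positivity
    · exact S0.mul_left _
    · intro m x hx
      have hx0 : (0:ℝ) < x := lt_trans (by norm_num) hx.1
      rw [Real.norm_eq_abs, abs_of_pos (by positivity)]
      exact qterm_bound (by norm_num) hx.1.le m
  have hc' : ContinuousOn q (Ioo (1/2 : ℝ) 2) := hc
  exact hc'.continuousAt (isOpen_Ioo.mem_nhds (by norm_num))



lemma sin_div_lim : Tendsto (fun v : ℝ => Real.sin v / v) (𝓝[≠] 0) (𝓝 1) := by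
  have h : HasDerivAt Real.sin 1 0 := by simpa using Real.hasDerivAt_sin 0
  have h2 := hasDerivAt_iff_tendsto_slope.mp h
  apply h2.congr
  intro v
  simp [slope_def_field]

lemma cube_lim : Tendsto (fun v : ℝ => (v - Real.sin v) / v ^ 3) (𝓝[≠] 0) (𝓝 (1 / 6)) := by
  have key : Tendsto (fun v : ℝ => (v - Real.sin v) / v ^ 3 - 1 / 6) (𝓝[≠] 0) (𝓝 0) := by
    have hbound : ∀ᶠ v in 𝓝[≠] (0:ℝ),
        ‖(v - Real.sin v) / v ^ 3 - 1 / 6‖ ≤ |v| * (5 / 96) := by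
      have h1 : Icc (-1 : ℝ) 1 ∈ 𝓝 (0 : ℝ) := by
        apply Icc_mem_nhds <;> norm_num
      filter_upwards [self_mem_nhdsWithin,
        eventually_nhdsWithin_of_eventually_nhds (eventually_of_mem h1 (fun y hy => hy))]
        with v hv0 hv1
      have hv0' : v ≠ 0 := hv0
      have habs : |v| ≤ 1 := abs_le.mpr ⟨hv1.1, hv1.2⟩
      have hb := Real.sin_bound habs
      have hv3 : v ^ 3 ≠ 0 := pow_ne_zero _ hv0'
      have hkey : (v - Real.sin v) / v ^ 3 - 1 / 6
          = -((Real.sin v - (v - v ^ 3 / 6)) / v ^ 3) := by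
        field_simp
        ring
      rw [Real.norm_eq_abs, hkey, abs_neg, abs_div, abs_pow]
      have habs3 : (0:ℝ) < |v| ^ 3 := by positivity
      rw [div_le_iff₀ habs3]
      calc |Real.sin v - (v - v ^ 3 / 6)| ≤ |v| ^ 4 * (5 / 96) := hb.trans (by
          have h4 : (0:ℝ) ≤ |v| ^ 4 := by positivity
          nlinarith [mul_le_mul_of_nonneg_left habs h4])
        _ = |v| * (5 / 96) * |v| ^ 3 := by ring
    have hg : Tendsto (fun v : ℝ => |v| * (5 / 96)) (𝓝[≠] (0:ℝ)) (𝓝 0) := by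
      have : Tendsto (fun v : ℝ => |v| * (5 / 96)) (𝓝 0) (𝓝 0) := by
        simpa using ((continuous_abs.tendsto' 0 0 abs_zero).mul_const (5 / 96 : ℝ))
      exact this.mono_left nhdsWithin_le_nhds
    exact squeeze_zero_norm' hbound hg
  have := key.add (tendsto_const_nhds (x := (1 : ℝ) / 6))
  simpa using this

lemma inv_sq_lim : Tendsto (fun v : ℝ => (1 / Real.sin v) ^ 2 - (1 / v) ^ 2)
    (𝓝[≠] 0) (𝓝 (1 / 3)) := by
  have hB : Tendsto (fun v : ℝ => (v + Real.sin v) / v) (𝓝[≠] 0) (𝓝 2) := by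
    have heq : (fun v : ℝ => (v + Real.sin v) / v) =ᶠ[𝓝[≠] 0]
        fun v => 1 + Real.sin v / v := by
      filter_upwards [self_mem_nhdsWithin] with v hv
      have : (v : ℝ) ≠ 0 := hv
      field_simp
    rw [tendsto_congr' heq]
    have := tendsto_const_nhds (x := (1:ℝ)) (f := 𝓝[≠] (0:ℝ)) |>.add sin_div_lim
    norm_num at this
    exact this
  have hC : Tendsto (fun v : ℝ => (v / Real.sin v) ^ 2) (𝓝[≠] 0) (𝓝 1) := by
    have h1 := (sin_div_lim.inv₀ one_ne_zero).pow 2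
    norm_num at h1
    exact h1
  have hsin : ∀ᶠ v in 𝓝[≠] (0:ℝ), Real.sin v ≠ 0 := by
    have h1 : Ioo (-Real.pi) Real.pi ∈ 𝓝 (0 : ℝ) := by
      apply Ioo_mem_nhds <;> [linarith [Real.pi_pos]; exact Real.pi_pos]
    filter_upwards [self_mem_nhdsWithin,
      eventually_nhdsWithin_of_eventually_nhds (eventually_of_mem h1 (fun y hy => hy))]
      with v hv0 hv1
    rw [Ne, Real.sin_eq_zero_iff_of_lt_of_lt hv1.1 hv1.2]
    exact hv0
  have hmul := (cube_lim.mul hB).mul hC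
  have heq : (fun v : ℝ => (v - Real.sin v) / v ^ 3 * ((v + Real.sin v) / v)
      * (v / Real.sin v) ^ 2) =ᶠ[𝓝[≠] 0]
      fun v => (1 / Real.sin v) ^ 2 - (1 / v) ^ 2 := by
    filter_upwards [self_mem_nhdsWithin, hsin] with v hv0 hvs
    have hv0' : (v : ℝ) ≠ 0 := hv0
    field_simp
    ring
  rw [tendsto_congr' heq] at hmul
  have hval : (1:ℝ) / 6 * 2 * 1 = 1 / 3 := by norm_num
  rwa [hval] at hmul

lemma sec_part : Tendsto (fun s : ℝ =>
      Real.pi ^ 2 / 4 * (1 / Real.cos (Real.pi * s / 2)) ^ 2 - ((1 - s) ^ 2)⁻¹)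
    (𝓝[≠] 1) (𝓝 (Real.pi ^ 2 / 12)) := by
  have hv : Tendsto (fun s : ℝ => Real.pi * (s - 1) / 2) (𝓝[≠] 1) (𝓝[≠] 0) := by
    rw [tendsto_nhdsWithin_iff]
    constructor
    · have hcont : Continuous fun s : ℝ => Real.pi * (s - 1) / 2 := by continuity
      have := hcont.tendsto 1
      norm_num at this
      exact this.mono_left nhdsWithin_le_nhds
    · filter_upwards [self_mem_nhdsWithin] with s hs
      have hs1 : s ≠ 1 := hs
      simp only [mem_compl_iff, mem_singleton_iff]
      intro h
      rw [div_eq_zero_iff] at h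
      rcases h with h | h
      · rcases mul_eq_zero.mp h with h | h
        · exact Real.pi_ne_zero h
        · exact hs1 (by linarith)
      · norm_num at h
  have hcomp := (inv_sq_lim.comp hv).const_mul (Real.pi ^ 2 / 4)
  simp only [Function.comp] at hcomp
  have heq : (fun s : ℝ => Real.pi ^ 2 / 4 *
        ((1 / Real.sin (Real.pi * (s - 1) / 2)) ^ 2 - (1 / (Real.pi * (s - 1) / 2)) ^ 2))
      =ᶠ[𝓝[≠] 1] fun s =>
        Real.pi ^ 2 / 4 * (1 / Real.cos (Real.pi * s / 2)) ^ 2 - ((1 - s) ^ 2)⁻¹ := by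
    filter_upwards [self_mem_nhdsWithin] with s hs
    have hs1 : s ≠ 1 := hs
    have hc : Real.cos (Real.pi * s / 2) = -Real.sin (Real.pi * (s - 1) / 2) := by
      have : Real.pi * s / 2 = Real.pi * (s - 1) / 2 + Real.pi / 2 := by ring
      rw [this, Real.cos_add_pi_div_two]
    have hpi := Real.pi_ne_zero
    have hs1' : s - 1 ≠ 0 := sub_ne_zero.mpr hs1
    have hs1'' : (1 : ℝ) - s ≠ 0 := fun hh => hs1 (by linarith)
    rw [hc]
    have h2 : (1 / -Real.sin (Real.pi * (s - 1) / 2)) ^ 2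
        = (1 / Real.sin (Real.pi * (s - 1) / 2)) ^ 2 := by
      rw [div_neg]; ring
    rw [h2]
    have h3 : Real.pi ^ 2 / 4 * (1 / (Real.pi * (s - 1) / 2)) ^ 2 = ((1 - s) ^ 2)⁻¹ := by
      field_simp
      ring
    rw [mul_sub, h3]
  rw [tendsto_congr' heq] at hcomp
  have : Real.pi ^ 2 / 4 * (1 / 3) = Real.pi ^ 2 / 12 := by ring
  rwa [this] at hcomp


end TrigammaAux

open TrigammaAux in
theorem tendsto_trigamma_sec_sq :
    Tendsto (fun s : ℝ => -deriv digamma (1 - s)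
        + Real.pi ^ 2 / 4 * (1 / Real.cos (Real.pi * s / 2)) ^ 2)
      (𝓝[≠] 1) (𝓝 (-(Real.pi ^ 2 / 12))) := by
  have h2 : Tendsto (fun s : ℝ => 2 - s) (𝓝[≠] (1:ℝ)) (𝓝 1) := by
    have hcont : Continuous fun s : ℝ => 2 - s := by continuity
    have := hcont.tendsto (1:ℝ)
    norm_num at this
    exact this.mono_left nhdsWithin_le_nhds
  have h1 : Tendsto (fun s : ℝ => -q (2 - s)) (𝓝[≠] (1:ℝ)) (𝓝 (-(Real.pi ^ 2 / 6))) := by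
    have h := (q_contAt.tendsto.comp h2).neg
    simp only [Function.comp] at h
    rwa [q_one] at h
  have h3 := h1.add sec_part
  have heq : (fun s : ℝ => -q (2 - s)
        + (Real.pi ^ 2 / 4 * (1 / Real.cos (Real.pi * s / 2)) ^ 2 - ((1 - s) ^ 2)⁻¹))
      =ᶠ[𝓝[≠] (1:ℝ)] fun s => -deriv digamma (1 - s)
        + Real.pi ^ 2 / 4 * (1 / Real.cos (Real.pi * s / 2)) ^ 2 := by
    have hmem : Set.Ioo (0:ℝ) 2 ∈ 𝓝 (1:ℝ) := isOpen_Ioo.mem_nhds (by norm_num)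
    filter_upwards [self_mem_nhdsWithin,
      eventually_nhdsWithin_of_eventually_nhds (eventually_of_mem hmem (fun y hy => hy))]
      with s hs1 hs2
    have hs1' : s ≠ 1 := hs1
    have ht : (1 - s) ∈ Set.Ioo (-1:ℝ) 1 := ⟨by linarith [hs2.2], by linarith [hs2.1]⟩
    have ht0 : (1:ℝ) - s ≠ 0 := fun h => hs1' (by linarith)
    have hd := deriv_digamma_eq ht ht0
    rw [show (1:ℝ) - s + 1 = 2 - s by ring] at hd
    rw [hd]
    ring
  rw [tendsto_congr' heq] at h3
  have hval : -(Real.pi ^ 2 / 6) + Real.pi ^ 2 / 12 = -(Real.pi ^ 2 / 12) := by ring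
  rwa [hval] at h3
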